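/- For every x ≥ 0, lim_{α→1⁻} W(-2x, -α/2, 1) = erfc(x), and this convergence is uniform on compact subsets of [0,∞); here erfc(x) = 1 - (2/√π) ∫_0^x e^{-z²} dz is the complementary error function. -/

import Mathlib

open MeasureTheory Filter Topology Set

/-- Riemann–Liouville fractional integral of order `α` with base point `a`:
`(I_a^α f)(t) = (1/Γ(α)) ∫_a^t (t-τ)^(α-1) f(τ) dτ`. -/
noncomputable def rlInt (a α : ℝ) (f : ℝ → ℝ) (t : ℝ) : ℝ :=
  (1 / Real.Gamma α) * ∫ τ in a..t, (t - τ) ^ (α - 1) * f τ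

/-- Riemann–Liouville fractional derivative of order `α ∈ (0,1)` with base point `a`:
`(D_a^{RL,α} f)(t) = d/dt (I_a^{1-α} f)(t)`. -/
noncomputable def rlDeriv (a α : ℝ) (f : ℝ → ℝ) (t : ℝ) : ℝ :=
  deriv (rlInt a (1 - α) f) t

/-- Caputo fractional derivative of order `α ∈ (0,1)` with base point `a`:
`(D_a^{C,α} f)(t) = (1/Γ(1-α)) ∫_a^t (t-τ)^(-α) f'(τ) dτ`. -/
noncomputable def caputoDeriv (a α : ℝ) (f : ℝ → ℝ) (t : ℝ) : ℝ :=
  (1 / Real.Gamma (1 - α)) * ∫ τ in a..t, (t - τ) ^ (-α) * deriv f τ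

/-- Absolute continuity of `f` on `[a,b]`, via the integral characterization:
`f(t) = f(a) + ∫_a^t g` for some integrable `g`. -/
def AbsContOn (f : ℝ → ℝ) (a b : ℝ) : Prop :=
  ∃ g : ℝ → ℝ, IntervalIntegrable g MeasureTheory.volume a b ∧
    ∀ t ∈ Set.Icc a b, f t = f a + ∫ τ in a..t, g τ

/-- The Wright function `W(x,ρ,β) = ∑_{k} x^k / (k! Γ(ρk+β))`. -/
noncomputable def wright (x ρ β : ℝ) : ℝ :=
  ∑' k : ℕ, x ^ k / ((Nat.factorial k : ℝ) * Real.Gamma (ρ * (k : ℝ) + β))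

/-- The error function `erf(x) = (2/√π) ∫_0^x e^{-z²} dz`. -/
noncomputable def erfReal (x : ℝ) : ℝ :=
  (2 / Real.sqrt Real.pi) * ∫ z in (0:ℝ)..x, Real.exp (-z ^ 2)


lemma continuous_invGamma : Continuous (fun x : ℝ => (Real.Gamma x)⁻¹) := by
  have h := Complex.differentiable_one_div_Gamma.continuous
  have he : (fun x : ℝ => (Real.Gamma x)⁻¹) = fun x : ℝ => ((Complex.Gamma (x:ℂ))⁻¹).re := by
    funext x
    rw [Complex.Gamma_ofReal, ← Complex.ofReal_inv, Complex.ofReal_re]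
  rw [he]
  exact Complex.continuous_re.comp (h.comp Complex.continuous_ofReal)

lemma invGamma_bound {s : ℝ} (hs : 0 < s) :
    |(Real.Gamma (1 - s))⁻¹| ≤ Real.Gamma s / Real.pi := by
  have hΓs : 0 < Real.Gamma s := Real.Gamma_pos_of_pos hs
  by_cases h : ∃ n : ℤ, (n : ℝ) = s
  · obtain ⟨n, hn⟩ := h
    have hn1 : 1 ≤ n := by
      have : (0:ℝ) < n := hn ▸ hs
      exact_mod_cast this
    obtain ⟨m, hm⟩ := Int.eq_ofNat_of_zero_le (by omega : (0:ℤ) ≤ n - 1)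
    have h0 : Real.Gamma (1 - s) = 0 := by
      have : 1 - s = -(m : ℝ) := by
        rw [← hn]; push_cast [show n = m + 1 by omega]; ring
      rw [this, Real.Gamma_neg_nat_eq_zero]
    rw [h0, inv_zero, abs_zero]
    positivity
  · have hsin : Real.sin (Real.pi * s) ≠ 0 := by
      intro hz
      rcases Real.sin_eq_zero_iff.mp hz with ⟨n, hn⟩
      refine h ⟨n, mul_left_cancel₀ Real.pi_ne_zero ?_⟩
      rw [← hn]; ring
    have hrefl := Real.Gamma_mul_Gamma_one_sub s
    have hΓ1s : Real.Gamma (1 - s) ≠ 0 := by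
      refine Real.Gamma_ne_zero fun m hm => ?_
      exact h ⟨(m:ℤ) + 1, by push_cast; linarith [hm]⟩
    have key : (Real.Gamma (1 - s))⁻¹ = Real.Gamma s * Real.sin (Real.pi * s) / Real.pi := by
      field_simp at hrefl ⊢
      have hsin' : Real.sin (s * Real.pi) ≠ 0 := by rwa [mul_comm] at hsin
      rw [eq_div_iff hsin'] at hrefl
      nlinarith [hrefl]
    rw [key, abs_div, abs_mul, abs_of_pos hΓs, abs_of_pos Real.pi_pos]
    have h1 : |Real.sin (Real.pi * s)| ≤ 1 := Real.abs_sin_le_one _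
    have := Real.pi_pos
    rw [div_le_div_iff₀ this this]
    nlinarith [mul_le_mul_of_nonneg_left h1 hΓs.le, this.le]


lemma gamma_mono : MonotoneOn Real.Gamma (Set.Ici 2) :=
  Real.Gamma_strictMonoOn_Ici.monotoneOn

lemma gamma_ratio {s : ℝ} (hs : 0 < s) :
    Real.Gamma s = Real.Gamma (s + 2) / (s * (s + 1)) := by
  have h1 : Real.Gamma (s + 1) = s * Real.Gamma s := Real.Gamma_add_one hs.ne'
  have h2 : Real.Gamma (s + 2) = (s + 1) * Real.Gamma (s + 1) := by
    have := Real.Gamma_add_one (s := s + 1) (by positivity)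
    rw [show s + 1 + 1 = s + 2 by ring] at this
    exact this
  rw [h2, h1]
  field_simp

lemma gamma_le_gamma_of_le {s t : ℝ} (hs : 2 ≤ s) (hst : s ≤ t) :
    Real.Gamma s ≤ Real.Gamma t :=
  gamma_mono (mem_Ici.mpr hs) (mem_Ici.mpr (hs.trans hst)) hst

lemma invGamma_unif_bound {s : ℝ} {k : ℕ} (h1 : 1/4 ≤ s) (h2 : s ≤ (k:ℝ)/2) :
    |(Real.Gamma (1 - s))⁻¹| ≤ 16 / (5 * Real.pi) * Real.Gamma ((k:ℝ)/2 + 2) := by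
  have hs : 0 < s := lt_of_lt_of_le (by norm_num) h1
  have hπ := Real.pi_pos
  have hΓ2 : 0 < Real.Gamma (s + 2) := Real.Gamma_pos_of_pos (by linarith)
  calc |(Real.Gamma (1 - s))⁻¹| ≤ Real.Gamma s / Real.pi := invGamma_bound hs
    _ = Real.Gamma (s + 2) / (s * (s + 1)) / Real.pi := by rw [← gamma_ratio hs]
    _ ≤ Real.Gamma (s + 2) * (16/5) / Real.pi := by
        have hss : (5:ℝ)/16 ≤ s*(s+1) := by nlinarith
        have hss0 : (0:ℝ) < s*(s+1) := by nlinarith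
        have inner : Real.Gamma (s+2)/(s*(s+1)) ≤ Real.Gamma (s+2)*(16/5) := by
          rw [div_le_iff₀ hss0]
          nlinarith [mul_le_mul_of_nonneg_left hss hΓ2.le]
        gcongr
    _ ≤ Real.Gamma ((k:ℝ)/2 + 2) * (16/5) / Real.pi := by
        have hg := gamma_le_gamma_of_le (s := s + 2) (by linarith)
          (show s + 2 ≤ (k:ℝ)/2 + 2 by linarith)
        gcongr
    _ = 16 / (5 * Real.pi) * Real.Gamma ((k:ℝ)/2 + 2) := by field_simp

lemma msq_le : ∀ m : ℕ, (m.factorial * m.factorial : ℕ) ≤ (2*m).factorial := fun m =>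
  Nat.le_of_dvd (Nat.factorial_pos _)
    (by simpa [two_mul] using Nat.factorial_mul_factorial_dvd_factorial_add m m)

lemma summable_gamma_bound {R : ℝ} (hR : 0 ≤ R) :
    Summable (fun k : ℕ => R ^ k / (Nat.factorial k : ℝ) * Real.Gamma ((k:ℝ)/2 + 2)) := by
  apply Summable.even_add_odd
  · refine Summable.of_nonneg_of_le (fun m => by positivity) (fun m => ?_)
      (Real.summable_pow_div_factorial (4*R^2))
    have hΓ : Real.Gamma (((2*m : ℕ):ℝ)/2 + 2) = ((m+1).factorial : ℝ) := by
      rw [show (((2*m : ℕ):ℝ)/2 + 2) = ((m+1 : ℕ) : ℝ) + 1 by push_cast; ring,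
        Real.Gamma_nat_eq_factorial]
    have hnat : ((m+1).factorial * m.factorial : ℕ) ≤ 4^m * (2*m).factorial := by
      calc (m+1).factorial * m.factorial = (m+1) * (m.factorial * m.factorial) := by
            rw [Nat.factorial_succ]; ring
        _ ≤ (m+1) * (2*m).factorial := Nat.mul_le_mul_left _ (msq_le m)
        _ ≤ 4^m * (2*m).factorial := Nat.mul_le_mul_right _
            (((Nat.lt_two_pow_self (n := m))).trans_le (Nat.pow_le_pow_left (by norm_num) m))
    have key : (((m+1).factorial : ℝ))/((2*m).factorial : ℝ) ≤ (4:ℝ)^m / m.factorial := by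
      rw [div_le_div_iff₀ (by positivity) (by positivity)]
      exact_mod_cast hnat
    have h4 : (4*R^2)^m = (4:ℝ)^m * R^(2*m) := by rw [mul_pow, pow_mul]
    calc R ^ (2*m) / ((2*m).factorial : ℝ) * Real.Gamma (((2*m : ℕ):ℝ)/2 + 2)
        = R^(2*m) * (((m+1).factorial : ℝ)/((2*m).factorial : ℝ)) := by rw [hΓ]; ring
      _ ≤ R^(2*m) * ((4:ℝ)^m / m.factorial) :=
          mul_le_mul_of_nonneg_left key (by positivity)
      _ = (4*R^2)^m / m.factorial := by rw [h4]; ring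
  · have hsum : Summable (fun m : ℕ => (2*R) * ((4*R^2)^m / m.factorial)) :=
      (Real.summable_pow_div_factorial (4*R^2)).mul_left _
    refine Summable.of_nonneg_of_le (fun m => by positivity) (fun m => ?_) hsum
    have hΓle : Real.Gamma (((2*m+1 : ℕ):ℝ)/2 + 2) ≤ ((m+2).factorial : ℝ) := by
      rw [show (((m+2 : ℕ)).factorial : ℝ) = Real.Gamma (((m+2 : ℕ) : ℝ) + 1) by
        rw [Real.Gamma_nat_eq_factorial]]
      have hm : (0:ℝ) ≤ (m:ℝ) := Nat.cast_nonneg m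
      apply gamma_le_gamma_of_le <;> push_cast <;> linarith
    have hΓpos : 0 < Real.Gamma (((2*m+1 : ℕ):ℝ)/2 + 2) :=
      Real.Gamma_pos_of_pos (by positivity)
    have hnat : ((m+2).factorial * m.factorial : ℕ) ≤ 2 * 4^m * (2*m+1).factorial := by
      have h2 : (2*m).factorial ≤ (2*m+1).factorial := Nat.factorial_le (by omega)
      have h3 : m + 1 ≤ 2^m := (Nat.lt_two_pow_self (n := m))
      have h4 : m + 2 ≤ 2 * 2^m := by
        have := (Nat.lt_two_pow_self (n := m)); omega
      calc (m+2).factorial * m.factorial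
          = ((m+2)*(m+1)) * (m.factorial * m.factorial) := by
            rw [Nat.factorial_succ, Nat.factorial_succ]; ring
        _ ≤ ((2*2^m)*(2^m)) * (2*m).factorial :=
            Nat.mul_le_mul (Nat.mul_le_mul h4 h3) (msq_le m)
        _ ≤ (2*4^m) * (2*m+1).factorial := by
            rw [show (2*2^m)*2^m = 2*(2^m*2^m) by ring, ← pow_add, ← two_mul,
              pow_mul]
            exact Nat.mul_le_mul_left _ h2
    have key : (((m+2).factorial : ℝ))/((2*m+1).factorial : ℝ) ≤ 2 * (4:ℝ)^m / m.factorial := by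
      rw [div_le_div_iff₀ (by positivity) (by positivity)]
      exact_mod_cast hnat
    have h4 : (4*R^2)^m = (4:ℝ)^m * R^(2*m) := by rw [mul_pow, pow_mul]
    calc R ^ (2*m+1) / ((2*m+1).factorial : ℝ) * Real.Gamma (((2*m+1 : ℕ):ℝ)/2 + 2)
        ≤ R ^ (2*m+1) / ((2*m+1).factorial : ℝ) * ((m+2).factorial : ℝ) := by
          apply mul_le_mul_of_nonneg_left hΓle (by positivity)
      _ = R ^ (2*m+1) * (((m+2).factorial : ℝ)/((2*m+1).factorial : ℝ)) := by ring
      _ ≤ R ^ (2*m+1) * (2 * (4:ℝ)^m / m.factorial) :=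
          mul_le_mul_of_nonneg_left key (by positivity)
      _ = 2*R * ((4*R^2)^m / m.factorial) := by rw [h4, pow_succ, pow_mul]; ring

lemma integral_exp_neg_sq {x : ℝ} (hx : 0 ≤ x) :
    ∫ z in (0:ℝ)..x, Real.exp (-z^2)
      = ∑' m : ℕ, (-1)^m * x^(2*m+1) / ((2*m+1) * m.factorial) := by
  have hexp : ∀ z : ℝ, Real.exp (-z^2) = ∑' m : ℕ, (-z^2)^m / m.factorial := by
    intro z
    rw [Real.exp_eq_exp_ℝ, NormedSpace.exp_eq_tsum_div]
  have hInt : ∀ m : ℕ, MeasureTheory.Integrable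
      (fun z : ℝ => (-z^2)^m / m.factorial) (MeasureTheory.volume.restrict (Ioc 0 x)) := by
    intro m
    exact (Continuous.integrableOn_Ioc (by continuity))
  have hval : ∀ m : ℕ, (∫ z in Ioc (0:ℝ) x, (-z^2)^m / m.factorial)
      = (-1)^m * x^(2*m+1) / ((2*m+1) * m.factorial) := by
    intro m
    rw [← intervalIntegral.integral_of_le hx]
    have h1 : ∀ z : ℝ, (-z^2)^m / (m.factorial : ℝ) = ((-1)^m / m.factorial) * z^(2*m) := by
      intro z; rw [neg_pow, pow_mul]; ring
    simp_rw [h1]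
    rw [intervalIntegral.integral_const_mul, integral_pow, zero_pow (Nat.succ_ne_zero _)]
    have hm1 : (2*(m:ℝ)+1) ≠ 0 := by positivity
    have hf : (m.factorial:ℝ) ≠ 0 := by positivity
    push_cast
    field_simp
    try ring
    try tauto
  have hnorm : ∀ m : ℕ, (∫ z in Ioc (0:ℝ) x, ‖(-z^2)^m / (m.factorial : ℝ)‖)
      = x^(2*m+1)/((2*m+1)*m.factorial) := by
    intro m
    have h1 : ∀ z : ℝ, ‖(-z^2)^m / (m.factorial : ℝ)‖ = (1/(m.factorial:ℝ)) * z^(2*m) := by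
      intro z
      have habs : |(-z^2)^m| = z^(2*m) := by
        rw [abs_pow, abs_neg, abs_of_nonneg (sq_nonneg z), ← pow_mul]
      rw [Real.norm_eq_abs, abs_div, habs, Nat.abs_cast]
      ring
    simp_rw [h1]
    rw [← intervalIntegral.integral_of_le hx, intervalIntegral.integral_const_mul, integral_pow,
      zero_pow (Nat.succ_ne_zero _)]
    have hm1 : (2*(m:ℝ)+1) ≠ 0 := by positivity
    have hf : (m.factorial:ℝ) ≠ 0 := by positivity
    push_cast
    field_simp
    try ring
    try tauto
  have hsum : Summable (fun m : ℕ =>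
      ∫ z in Ioc (0:ℝ) x, ‖(-z^2)^m / (m.factorial : ℝ)‖) := by
    simp_rw [hnorm]
    refine Summable.of_nonneg_of_le (fun m => by positivity) (fun m => ?_)
      ((Real.summable_pow_div_factorial (x^2)).mul_left x)
    have h2 : (0:ℝ) < (m.factorial : ℝ) := by positivity
    have hm0 : (0:ℝ) ≤ (m:ℝ) := Nat.cast_nonneg m
    have hp : x^(2*m+1) = x * (x^2)^m := by rw [pow_succ, pow_mul]; ring
    have step := div_le_div_of_nonneg_left (by positivity : (0:ℝ) ≤ x^(2*m+1)) h2
      (by nlinarith : (m.factorial:ℝ) ≤ (2*(m:ℝ)+1) * m.factorial)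
    calc x^(2*m+1)/((2*(m:ℝ)+1) * m.factorial) ≤ x^(2*m+1)/(m.factorial:ℝ) := step
      _ = x * ((x^2)^m / m.factorial) := by rw [hp]; ring
  calc (∫ z in (0:ℝ)..x, Real.exp (-z^2))
      = ∫ z in Ioc (0:ℝ) x, ∑' m : ℕ, (-z^2)^m / m.factorial := by
        rw [intervalIntegral.integral_of_le hx]
        exact MeasureTheory.integral_congr_ae (Filter.Eventually.of_forall fun z => hexp z)
    _ = ∑' m : ℕ, ∫ z in Ioc (0:ℝ) x, (-z^2)^m / m.factorial :=
        (MeasureTheory.integral_tsum_of_summable_integral_norm hInt hsum).symm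
    _ = ∑' m : ℕ, (-1)^m * x^(2*m+1) / ((2*m+1) * m.factorial) := tsum_congr hval

lemma gamma_half_sub (m : ℕ) :
    Real.Gamma (1/2 - m) = (-4)^m * m.factorial * Real.sqrt Real.pi / (2*m).factorial := by
  induction m with
  | zero =>
    rw [Nat.cast_zero, sub_zero, Real.Gamma_one_half_eq]
    norm_num
  | succ n ih =>
    have hn0 : (0:ℝ) ≤ (n:ℝ) := Nat.cast_nonneg n
    have hne : (1/2 : ℝ) - ((n:ℝ)+1) ≠ 0 := by intro h; nlinarith
    have hrec : Real.Gamma (1/2 - (n:ℝ)) = ((1/2 : ℝ) - ((n:ℝ)+1)) * Real.Gamma (1/2 - ((n:ℝ)+1)) := by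
      have h := Real.Gamma_add_one hne
      rw [show (1/2 : ℝ) - ((n:ℝ)+1) + 1 = 1/2 - n by ring] at h
      exact h
    have hfac : (0:ℝ) < ((2*n).factorial : ℝ) := by positivity
    have hexp : ((2*(n+1)).factorial : ℝ) = (2*(n:ℝ)+2) * ((2*(n:ℝ)+1) * (2*n).factorial) := by
      rw [show 2*(n+1) = (2*n+1)+1 by ring, Nat.factorial_succ, Nat.factorial_succ]
      push_cast
      ring
    rw [ih] at hrec
    have hG : Real.Gamma (1/2 - ((n:ℝ)+1))
        = ((-4:ℝ)^n * n.factorial * Real.sqrt Real.pi / (2*n).factorial)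
          / ((1/2:ℝ) - ((n:ℝ)+1)) := by
      rw [eq_div_iff hne, mul_comm]
      exact hrec.symm
    rw [show ((n+1 : ℕ):ℝ) = (n:ℝ)+1 by push_cast; ring, hG, hexp]
    push_cast [Nat.factorial_succ]
    rw [pow_succ, div_div,
      div_eq_div_iff (mul_ne_zero hfac.ne' hne) (by positivity)]
    ring

lemma summable_erf_series {x : ℝ} (hx : 0 ≤ x) :
    Summable (fun m : ℕ => (-1:ℝ)^m * x^(2*m+1) / ((2*m+1) * m.factorial)) := by
  have h := (Real.summable_pow_div_factorial (x^2)).mul_left x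
  refine Summable.of_norm (Summable.of_nonneg_of_le (fun m => norm_nonneg _) (fun m => ?_) h)
  have hm0 : (0:ℝ) ≤ (m:ℝ) := Nat.cast_nonneg m
  have h2 : (0:ℝ) < (m.factorial : ℝ) := by positivity
  have habs : ‖(-1:ℝ)^m * x^(2*m+1) / ((2*m+1) * m.factorial)‖
      = x^(2*m+1) / ((2*(m:ℝ)+1) * m.factorial) := by
    rw [Real.norm_eq_abs, abs_div, abs_mul, abs_pow, abs_neg, abs_one, one_pow, one_mul,
      abs_of_nonneg (by positivity : (0:ℝ) ≤ x^(2*m+1)),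
      abs_of_nonneg (by positivity : (0:ℝ) ≤ (2*(m:ℝ)+1) * m.factorial)]
  rw [habs]
  have hp : x^(2*m+1) = x * (x^2)^m := by rw [pow_succ, pow_mul]; ring
  have step := div_le_div_of_nonneg_left (by positivity : (0:ℝ) ≤ x^(2*m+1)) h2
    (by nlinarith : (m.factorial:ℝ) ≤ (2*(m:ℝ)+1) * m.factorial)
  calc x^(2*m+1)/((2*(m:ℝ)+1) * m.factorial) ≤ x^(2*m+1)/(m.factorial:ℝ) := step
    _ = x * ((x^2)^m / m.factorial) := by rw [hp]; ring

lemma wright_limit_eq {x : ℝ} (hx : 0 ≤ x) :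
    (∑' k : ℕ, (-(2*x))^k / ((Nat.factorial k : ℝ) * Real.Gamma (-(1/2:ℝ) * (k:ℝ) + 1)))
      = 1 - erfReal x := by
  set f : ℕ → ℝ :=
    fun k => (-(2*x))^k / ((Nat.factorial k : ℝ) * Real.Gamma (-(1/2:ℝ) * (k:ℝ) + 1)) with hf
  have heven : (fun m : ℕ => f (2*m)) = (fun m : ℕ => if m = 0 then (1:ℝ) else 0) := by
    funext m
    match m with
    | 0 => simp [hf, Real.Gamma_one]
    | (m+1) =>
      have harg : -(1/2:ℝ) * ((2*(m+1) : ℕ):ℝ) + 1 = -((m:ℕ):ℝ) := by push_cast; ring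
      simp only [hf, harg, Real.Gamma_neg_nat_eq_zero, mul_zero, div_zero, if_neg (Nat.succ_ne_zero m)]
  have hodd : ∀ m : ℕ, f (2*m+1)
      = (-(2/Real.sqrt Real.pi)) * ((-1:ℝ)^m * x^(2*m+1) / ((2*m+1) * m.factorial)) := by
    intro m
    have harg : -(1/2:ℝ) * ((2*m+1 : ℕ):ℝ) + 1 = 1/2 - (m:ℝ) := by push_cast; ring
    have hu : ((-1:ℝ)^m) * ((-1:ℝ)^m) = 1 := by
      rw [← pow_add, ← two_mul, pow_mul]; norm_num
    have hsπ : Real.sqrt Real.pi ≠ 0 := (Real.sqrt_pos.mpr Real.pi_pos).ne'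
    have hf1 : ((2*m).factorial : ℝ) ≠ 0 := by positivity
    have hf2 : ((m).factorial : ℝ) ≠ 0 := by positivity
    have hm0 : (0:ℝ) ≤ (m:ℝ) := Nat.cast_nonneg m
    have hfacs : ((2*m+1).factorial : ℝ) = (2*(m:ℝ)+1) * ((2*m).factorial : ℝ) := by
      rw [Nat.factorial_succ]; push_cast; ring
    have hneg : (-(2*x))^(2*m+1) = -(2 * (2:ℝ)^(2*m) * x^(2*m+1)) := by
      rw [show -(2*x) = (-1) * (2*x) by ring, mul_pow, Odd.neg_one_pow ⟨m, by ring⟩,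
        mul_pow, pow_succ]
      ring
    have h4 : ((-4:ℝ))^m = (-1:ℝ)^m * 2^(2*m) := by
      rw [show (-4:ℝ) = (-1) * 2^2 by norm_num, mul_pow, ← pow_mul]
    rw [hf]
    simp only
    rw [harg, gamma_half_sub, hfacs, hneg, h4]
    have h2m : (0:ℝ) < (2:ℝ)^(2*m) := by positivity
    rcases Nat.even_or_odd m with he | ho
    · rw [he.neg_one_pow]
      field_simp
    · rw [ho.neg_one_pow]
      field_simp
  -- summability
  have hse : Summable (fun m : ℕ => f (2*m)) := by
    rw [heven]
    exact summable_of_ne_finset_zero (s := {0}) (by intro b hb; simp [if_neg (by simpa using hb)])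
  have hso : Summable (fun m : ℕ => f (2*m+1)) := by
    have := (summable_erf_series hx).mul_left (-(2/Real.sqrt Real.pi))
    refine this.congr fun m => ?_
    rw [hodd m]
  rw [← tsum_even_add_odd hse hso]
  have hevensum : (∑' m : ℕ, f (2*m)) = 1 := by
    rw [heven]
    exact tsum_ite_eq 0 1
  have hoddsum : (∑' m : ℕ, f (2*m+1)) = -(erfReal x) := by
    calc (∑' m : ℕ, f (2*m+1))
        = ∑' m : ℕ, (-(2/Real.sqrt Real.pi)) * ((-1:ℝ)^m * x^(2*m+1) / ((2*m+1) * m.factorial)) :=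
          tsum_congr hodd
      _ = (-(2/Real.sqrt Real.pi)) * ∑' m : ℕ, ((-1:ℝ)^m * x^(2*m+1) / ((2*m+1) * m.factorial)) :=
          tsum_mul_left
      _ = -(erfReal x) := by
          rw [← integral_exp_neg_sq hx, erfReal]
          ring
  rw [hevensum, hoddsum]
  ring

lemma gamma_two_eq : Real.Gamma 2 = 1 := by
  rw [show (2:ℝ) = ((1:ℕ):ℝ) + 1 by norm_num, Real.Gamma_nat_eq_factorial]
  simp

lemma one_le_const : (1:ℝ) ≤ 16/(5*Real.pi) := by
  rw [le_div_iff₀ (by positivity)]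
  nlinarith [Real.pi_lt_d2]

lemma invGamma_term_bound {α : ℝ} (hα : α ∈ Icc (1/2:ℝ) 1) (k : ℕ) :
    |(Real.Gamma (-(α/2) * (k:ℝ) + 1))⁻¹| ≤ 16/(5*Real.pi) * Real.Gamma ((k:ℝ)/2 + 2) := by
  rcases Nat.eq_zero_or_pos k with rfl | hk
  · simp only [Nat.cast_zero, mul_zero, zero_add, Real.Gamma_one, inv_one, abs_one]
    calc (1:ℝ) ≤ 16/(5*Real.pi) := one_le_const
      _ = 16/(5*Real.pi) * 1 := by ring
      _ = 16/(5*Real.pi) * Real.Gamma ((0:ℝ)/2 + 2) := by norm_num [gamma_two_eq]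
  · have hk1 : (1:ℝ) ≤ (k:ℝ) := by exact_mod_cast hk
    have harg : -(α/2) * (k:ℝ) + 1 = 1 - (α/2 * k) := by ring
    rw [harg]
    exact invGamma_unif_bound (by nlinarith [hα.1, hα.2]) (by nlinarith [hα.1, hα.2])

lemma invGamma_diff_bound {α : ℝ} (hα : α ∈ Icc (1/2:ℝ) 1) (k : ℕ) :
    |(Real.Gamma (-(α/2) * (k:ℝ) + 1))⁻¹ - (Real.Gamma (-(1/2:ℝ) * (k:ℝ) + 1))⁻¹|
      ≤ 2 * (16/(5*Real.pi) * Real.Gamma ((k:ℝ)/2 + 2)) := by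
  have h1 := invGamma_term_bound hα k
  have h2 := invGamma_term_bound (show (1:ℝ) ∈ Icc (1/2:ℝ) 1 by constructor <;> norm_num) k
  rw [show -((1:ℝ)/2) * (k:ℝ) + 1 = -(1/2:ℝ) * (k:ℝ) + 1 by norm_num] at h2
  calc |(Real.Gamma (-(α/2) * (k:ℝ) + 1))⁻¹ - (Real.Gamma (-(1/2:ℝ) * (k:ℝ) + 1))⁻¹|
      ≤ |(Real.Gamma (-(α/2) * (k:ℝ) + 1))⁻¹| + |(Real.Gamma (-(1/2:ℝ) * (k:ℝ) + 1))⁻¹| :=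
        abs_sub _ _
    _ ≤ _ := by linarith

lemma wright_term_bound {C x α : ℝ} (hx : x ∈ Icc 0 C) (hα : α ∈ Icc (1/2:ℝ) 1) (k : ℕ) :
    |(-(2*x))^k / ((Nat.factorial k : ℝ) * Real.Gamma (-(α/2) * (k:ℝ) + 1))|
      ≤ (2*C)^k / (Nat.factorial k : ℝ) * (16/(5*Real.pi) * Real.Gamma ((k:ℝ)/2 + 2)) := by
  have hfac : (0:ℝ) < (Nat.factorial k : ℝ) := by positivity
  have hsplit : (-(2*x))^k / ((Nat.factorial k : ℝ) * Real.Gamma (-(α/2) * (k:ℝ) + 1))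
      = ((-(2*x))^k / (Nat.factorial k : ℝ)) * (Real.Gamma (-(α/2) * (k:ℝ) + 1))⁻¹ := by
    rw [div_mul_eq_div_div, div_eq_mul_inv]
  rw [hsplit, abs_mul, abs_div, abs_pow, abs_neg,
    abs_of_nonneg (by nlinarith [hx.1] : (0:ℝ) ≤ 2*x), abs_of_pos hfac]
  have h1 : (2*x)^k ≤ (2*C)^k := pow_le_pow_left₀ (by nlinarith [hx.1]) (by nlinarith [hx.2]) k
  have h2 := invGamma_term_bound hα k
  have hCk : (0:ℝ) ≤ (2*C)^k := pow_nonneg (by nlinarith [hx.1, hx.2]) k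
  apply mul_le_mul _ h2 (abs_nonneg _) (div_nonneg hCk hfac.le)
  exact div_le_div_of_nonneg_right h1 hfac.le

lemma summable_wright_bound {C : ℝ} (hC : 0 ≤ C) (c : ℝ) :
    Summable (fun k : ℕ => (2*C)^k / (Nat.factorial k : ℝ)
      * (c * Real.Gamma ((k:ℝ)/2 + 2))) := by
  refine ((summable_gamma_bound (by positivity : (0:ℝ) ≤ 2*C)).mul_left c).congr fun k => ?_
  ring

/-- `W(-2x,-α/2,1)` converges to `erfc(x) = 1 - erf(x)` as `α → 1⁻`,
pointwise on `[0,∞)` and uniformly on compact subsets of `[0,∞)`. -/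
theorem wright_tendsto_erfc :
    (∀ x : ℝ, 0 ≤ x →
      Filter.Tendsto (fun α : ℝ => wright (-(2 * x)) (-(α / 2)) 1)
        (nhdsWithin 1 (Set.Ioo (0:ℝ) 1))
        (nhds (1 - erfReal x))) ∧
    (∀ K : Set ℝ, K ⊆ Set.Ici 0 → IsCompact K →
      TendstoUniformlyOn (fun (α : ℝ) (x : ℝ) => wright (-(2 * x)) (-(α / 2)) 1)
        (fun x => 1 - erfReal x)
        (nhdsWithin 1 (Set.Ioo (0:ℝ) 1)) K) := by
  have main : ∀ K : Set ℝ, K ⊆ Set.Ici 0 → IsCompact K →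
      TendstoUniformlyOn (fun (α : ℝ) (x : ℝ) => wright (-(2 * x)) (-(α / 2)) 1)
        (fun x => 1 - erfReal x)
        (nhdsWithin 1 (Set.Ioo (0:ℝ) 1)) K := by
    intro K hK hKc
    obtain ⟨C0, hC0⟩ := hKc.bddAbove
    set C : ℝ := max C0 0 with hCdef
    have hC : (0:ℝ) ≤ C := le_max_right _ _
    have h2C : (0:ℝ) ≤ 2*C := by linarith
    have hnn : ∀ k : ℕ, (0:ℝ) ≤ (2*C)^k / (Nat.factorial k : ℝ) :=
      fun k => div_nonneg (pow_nonneg h2C k) (Nat.cast_nonneg _)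
    have hKC : ∀ x ∈ K, x ∈ Icc (0:ℝ) C :=
      fun x hx => ⟨hK hx, le_trans (hC0 hx) (le_max_left _ _)⟩
    set D : ℝ → ℝ := fun α => ∑' k : ℕ, (2*C)^k / (Nat.factorial k : ℝ) *
        |(Real.Gamma (-(α/2) * (k:ℝ) + 1))⁻¹ - (Real.Gamma (-(1/2:ℝ) * (k:ℝ) + 1))⁻¹| with hD
    have hbound_sum := summable_wright_bound hC (2 * (16/(5*Real.pi)))
    have hev : ∀ᶠ α in nhdsWithin 1 (Ioo (0:ℝ) 1), α ∈ Icc (1/2:ℝ) 1 := by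
      filter_upwards [mem_nhdsWithin_of_mem_nhds
        (Ioo_mem_nhds (by norm_num : (1/2:ℝ) < 1) (by norm_num : (1:ℝ) < 2)),
        self_mem_nhdsWithin] with α h1 h2
      exact ⟨h1.1.le, h2.2.le⟩
    have hDten : Tendsto D (nhdsWithin 1 (Ioo (0:ℝ) 1)) (nhds 0) := by
      have hab : ∀ k : ℕ, Tendsto (fun α : ℝ => (2*C)^k / (Nat.factorial k : ℝ) *
          |(Real.Gamma (-(α/2) * (k:ℝ) + 1))⁻¹ - (Real.Gamma (-(1/2:ℝ) * (k:ℝ) + 1))⁻¹|)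
          (nhdsWithin 1 (Ioo (0:ℝ) 1)) (nhds 0) := by
        intro k
        have hc : Continuous fun α : ℝ => (2*C)^k / (Nat.factorial k : ℝ) *
            |(Real.Gamma (-(α/2) * (k:ℝ) + 1))⁻¹ - (Real.Gamma (-(1/2:ℝ) * (k:ℝ) + 1))⁻¹| := by
          apply Continuous.mul continuous_const
          apply Continuous.abs
          apply Continuous.sub _ continuous_const
          exact continuous_invGamma.comp (by fun_prop)
        have h1 := (hc.tendsto 1).mono_left
          (nhdsWithin_le_nhds : nhdsWithin (1:ℝ) (Ioo (0:ℝ) 1) ≤ nhds 1)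
        simpa using h1
      have hbnd : ∀ᶠ α in nhdsWithin 1 (Ioo (0:ℝ) 1), ∀ k : ℕ,
          ‖(2*C)^k / (Nat.factorial k : ℝ) *
            |(Real.Gamma (-(α/2) * (k:ℝ) + 1))⁻¹ - (Real.Gamma (-(1/2:ℝ) * (k:ℝ) + 1))⁻¹|‖
          ≤ (2*C)^k / (Nat.factorial k : ℝ) *
            (2 * (16/(5*Real.pi)) * Real.Gamma ((k:ℝ)/2 + 2)) := by
        filter_upwards [hev] with α hα
        intro k
        rw [Real.norm_eq_abs, abs_of_nonneg (mul_nonneg (hnn k) (abs_nonneg _))]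
        have h := invGamma_diff_bound hα k
        rw [mul_assoc]
        exact mul_le_mul_of_nonneg_left h (hnn k)
      have hres := tendsto_tsum_of_dominated_convergence
        (g := fun _ : ℕ => (0:ℝ)) hbound_sum hab hbnd
      rw [hD]
      simpa using hres
    have hkey : ∀ α ∈ Icc (1/2:ℝ) 1, ∀ x ∈ Icc (0:ℝ) C,
        |wright (-(2*x)) (-(α/2)) 1 - (1 - erfReal x)| ≤ D α := by
      intro α hα x hx
      have hx0 : (0:ℝ) ≤ x := hx.1
      have h1mem : (1:ℝ) ∈ Icc (1/2:ℝ) 1 := ⟨by norm_num, le_refl 1⟩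
      set f : ℕ → ℝ := fun k =>
        (-(2*x))^k / ((Nat.factorial k : ℝ) * Real.Gamma (-(α/2) * (k:ℝ) + 1)) with hf
      set g : ℕ → ℝ := fun k =>
        (-(2*x))^k / ((Nat.factorial k : ℝ) * Real.Gamma (-(1/2:ℝ) * (k:ℝ) + 1)) with hg
      have hsum_b := summable_wright_bound hC (16/(5*Real.pi))
      have hsf : Summable f := by
        refine Summable.of_norm (Summable.of_nonneg_of_le (fun k => norm_nonneg _)
          (fun k => ?_) hsum_b)
        rw [Real.norm_eq_abs]
        exact wright_term_bound hx hα k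
      have hsg : Summable g := by
        refine Summable.of_norm (Summable.of_nonneg_of_le (fun k => norm_nonneg _)
          (fun k => ?_) hsum_b)
        rw [Real.norm_eq_abs]
        exact wright_term_bound hx h1mem k
      have hterm : ∀ k : ℕ, |f k - g k| ≤ (2*C)^k / (Nat.factorial k : ℝ)
          * |(Real.Gamma (-(α/2) * (k:ℝ) + 1))⁻¹ - (Real.Gamma (-(1/2:ℝ) * (k:ℝ) + 1))⁻¹| := by
        intro k
        have hfac : (0:ℝ) < (Nat.factorial k : ℝ) := by positivity
        have hsplit : f k - g k = ((-(2*x))^k / (Nat.factorial k : ℝ)) *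
            ((Real.Gamma (-(α/2) * (k:ℝ) + 1))⁻¹ - (Real.Gamma (-(1/2:ℝ) * (k:ℝ) + 1))⁻¹) := by
          rw [hf, hg]
          simp only
          rw [div_mul_eq_div_div, div_mul_eq_div_div, div_eq_mul_inv _ (Real.Gamma _),
            div_eq_mul_inv _ (Real.Gamma _), mul_sub]
        rw [hsplit, abs_mul]
        apply mul_le_mul_of_nonneg_right _ (abs_nonneg _)
        rw [abs_div, abs_pow, abs_neg,
          abs_of_nonneg (by nlinarith [hx.1] : (0:ℝ) ≤ 2*x), abs_of_pos hfac]
        exact div_le_div_of_nonneg_right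
          (pow_le_pow_left₀ (by nlinarith [hx.1]) (by nlinarith [hx.2]) k) hfac.le
      have hsum_dom : Summable (fun k : ℕ => (2*C)^k / (Nat.factorial k : ℝ)
          * |(Real.Gamma (-(α/2) * (k:ℝ) + 1))⁻¹ - (Real.Gamma (-(1/2:ℝ) * (k:ℝ) + 1))⁻¹|) := by
        refine Summable.of_nonneg_of_le (fun k => mul_nonneg (hnn k) (abs_nonneg _))
          (fun k => ?_) hbound_sum
        have h := invGamma_diff_bound hα k
        rw [mul_assoc]
        exact mul_le_mul_of_nonneg_left h (hnn k)
      have habs : Summable (fun k => |f k - g k|) :=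
        Summable.of_nonneg_of_le (fun k => abs_nonneg _) hterm hsum_dom
      have e1 : wright (-(2*x)) (-(α/2)) 1 = ∑' k, f k := rfl
      have e2 : (1 : ℝ) - erfReal x = ∑' k, g k := (wright_limit_eq hx0).symm
      rw [e1, e2, ← Summable.tsum_sub hsf hsg]
      calc |∑' k, (f k - g k)| ≤ ∑' k, |f k - g k| := by
            have := norm_tsum_le_tsum_norm (f := fun k => f k - g k) (by simpa using habs)
            simpa using this
        _ ≤ D α := Summable.tsum_le_tsum hterm habs hsum_dom
    rw [Metric.tendstoUniformlyOn_iff]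
    intro ε hε
    filter_upwards [(Metric.tendsto_nhds.mp hDten) ε hε, hev] with α hDα hα
    intro x hxK
    have h := hkey α hα x (hKC x hxK)
    rw [Real.dist_eq, sub_zero] at hDα
    rw [Real.dist_eq]
    calc |(1 - erfReal x) - wright (-(2*x)) (-(α/2)) 1|
        = |wright (-(2*x)) (-(α/2)) 1 - (1 - erfReal x)| := abs_sub_comm _ _
      _ ≤ D α := h
      _ ≤ |D α| := le_abs_self _
      _ < ε := hDα
  constructor
  · intro x hx
    have h := (main {x} (by simpa using hx) isCompact_singleton).tendsto_at (mem_singleton x)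
    simpa using h
  · exact main
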